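/- Let B be a smooth manifold and let λ : B → ℝ be a lower semi-continuous function with 0 < λ(y) ≤ 1 for all y ∈ B. Then there exists a sequence of smooth functions λ_n : B → ℝ (n ∈ ℕ) such that 0 < λ_n(y) < λ_{n+1}(y) < λ(y) for all n and all y ∈ B, and sup_{n} λ_n(y) = λ(y) for every y ∈ B. -/

import Mathlib

open Set Manifold

noncomputable section

/-- Smooth version of a theorem of Baire: any lower semi-continuous `l : B → (0,1]`
on a smooth manifold `B` is the supremum of a strictly increasing sequence of positive
smooth functions `f n` with `f n < l` pointwise. -/
theorem lsc_is_sup_of_increasing_smooth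
    {E : Type*} [NormedAddCommGroup E] [NormedSpace ℝ E] [FiniteDimensional ℝ E]
    {H : Type*} [TopologicalSpace H] (I : ModelWithCorners ℝ E H) [I.Boundaryless]
    {B : Type*} [TopologicalSpace B] [ChartedSpace H B]
    [IsManifold I (⊤ : ℕ∞) B] [T2Space B] [SecondCountableTopology B]
    (l : B → ℝ) (hl : LowerSemicontinuous l) (hl_range : ∀ y, l y ∈ Ioc (0 : ℝ) 1) :
    ∃ f : ℕ → B → ℝ,
      (∀ n, ContMDiff I 𝓘(ℝ, ℝ) (⊤ : ℕ∞) (f n)) ∧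
      (∀ n y, 0 < f n y) ∧
      (∀ n y, f n y < f (n + 1) y) ∧
      (∀ n y, f n y < l y) ∧
      (∀ y, (⨆ n, f n y) = l y) := by
  rcases isEmpty_or_nonempty B with hB | hB
  · exact ⟨fun n y => 0, fun n => contMDiff_const, fun n y => (hB.false y).elim,
      fun n y => (hB.false y).elim, fun n y => (hB.false y).elim,
      fun y => (hB.false y).elim⟩
  haveI := I.locallyCompactSpace
  haveI := ChartedSpace.locallyCompactSpace H B
  haveI := Manifold.metrizableSpace I B
  letI : MetricSpace B := TopologicalSpace.metrizableSpaceMetric B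
  have hl_pos : ∀ y, 0 < l y := fun y => (hl_range y).1
  have hl_le : ∀ y, l y ≤ 1 := fun y => (hl_range y).2
  -- the Moreau-Yosida type approximations
  set c : ℕ → B → ℝ := fun n y => ⨅ z : B, (l z + (n + 1) * dist y z) with hc_def
  have hbdd : ∀ (n : ℕ) (y : B), BddBelow (range fun z : B => l z + (n + 1) * dist y z) := by
    intro n y
    refine ⟨0, ?_⟩
    rintro w ⟨z, rfl⟩
    have := (hl_pos z).le
    positivity
  have hc_le : ∀ n y, c n y ≤ l y := by
    intro n y
    have := ciInf_le (hbdd n y) y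
    simpa using this
  -- lower bound from lower semicontinuity
  have key : ∀ (y : B) (ε : ℝ), 0 < ε →
      ∃ δ : ℝ, 0 < δ ∧ ∀ n : ℕ, min (l y - ε) ((n + 1) * δ) ≤ c n y := by
    intro y ε hε
    have h1 : ∀ᶠ z in nhds y, l y - ε < l z := hl y _ (by linarith [hl_pos y])
    rcases Metric.eventually_nhds_iff.1 h1 with ⟨δ, hδ, hδ'⟩
    refine ⟨δ, hδ, fun n => le_ciInf fun z => ?_⟩
    rcases lt_or_ge (dist y z) δ with h | h
    · have : l y - ε < l z := hδ' (by rwa [dist_comm])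
      have h2 : (0:ℝ) ≤ (n + 1) * dist y z := by positivity
      calc min (l y - ε) ((n + 1) * δ) ≤ l y - ε := min_le_left _ _
        _ ≤ l z + (n + 1) * dist y z := by linarith
    · have h2 : ((n:ℝ) + 1) * δ ≤ (n + 1) * dist y z := by
        apply mul_le_mul_of_nonneg_left h (by positivity)
      calc min (l y - ε) ((n + 1) * δ) ≤ (n + 1) * δ := min_le_right _ _
        _ ≤ l z + (n + 1) * dist y z := by linarith [(hl_pos z).le]
  have hc_pos : ∀ n y, 0 < c n y := by
    intro n y
    obtain ⟨δ, hδ, hmin⟩ := key y (l y / 2) (by linarith [hl_pos y])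
    refine lt_of_lt_of_le ?_ (hmin n)
    apply lt_min (by linarith [hl_pos y]) (by positivity)
  have hc_mono : ∀ (n m : ℕ), n ≤ m → ∀ y, c n y ≤ c m y := by
    intro n m hnm y
    refine le_ciInf fun z => ?_
    refine le_trans (ciInf_le (hbdd n y) z) ?_
    have h1 : ((n:ℝ) + 1) ≤ (m:ℝ) + 1 := by exact_mod_cast by omega
    have h2 : (0:ℝ) ≤ dist y z := dist_nonneg
    nlinarith
  -- c n approaches l from below
  have hc_sup : ∀ (y : B) (ε : ℝ), 0 < ε → ∃ n, ∀ m, n ≤ m → l y - ε ≤ c m y := by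
    intro y ε hε
    obtain ⟨δ, hδ, hmin⟩ := key y ε hε
    obtain ⟨n, hn⟩ := exists_nat_ge (1 / δ)
    refine ⟨n, fun m hm => le_trans ?_ (hmin m)⟩
    have h1 : (1:ℝ) ≤ (m + 1) * δ := by
      rw [div_le_iff₀ hδ] at hn
      have : (n:ℝ) ≤ (m:ℝ) := by exact_mod_cast hm
      nlinarith
    refine le_min le_rfl (by linarith [hl_le y])
  -- Lipschitz continuity of c n
  have hc_cont : ∀ n, Continuous (c n) := by
    intro n
    have : LipschitzWith ((n : NNReal) + 1) (c n) := by
      apply LipschitzWith.of_le_add_mul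
      intro x y
      have h3 : (((n : NNReal) + 1 : NNReal) : ℝ) = (n:ℝ) + 1 := by push_cast; ring
      rw [h3, ← sub_le_iff_le_add]
      simp only [hc_def]
      refine le_ciInf fun z => ?_
      have h1 : c n x ≤ l z + (n + 1) * dist x z := ciInf_le (hbdd n x) z
      have h2 : dist x z ≤ dist x y + dist y z := dist_triangle x y z
      simp only [hc_def] at h1
      nlinarith [dist_nonneg (x := x) (y := y)]
    exact this.continuous
  -- the strictly increasing continuous minorants
  set a : ℕ → ℝ := fun n => 1 - (1/2 : ℝ) ^ (n + 1) with ha_def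
  have ha_pos : ∀ n, 0 < a n := by
    intro n
    have h : (1/2:ℝ) ^ (n+1) < 1 := pow_lt_one₀ (by norm_num) (by norm_num) (by omega)
    simp only [ha_def]
    linarith
  have ha_lt_one : ∀ n, a n < 1 := by
    intro n
    have h : (0:ℝ) < (1/2:ℝ) ^ (n+1) := by positivity
    simp only [ha_def]
    linarith
  have ha_mono : ∀ n, a n < a (n + 1) := by
    intro n
    have : (1/2:ℝ) ^ (n+1+1) < (1/2:ℝ) ^ (n+1) :=
      pow_lt_pow_right_of_lt_one₀ (by norm_num) (by norm_num) (by omega)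
    simp only [ha_def]
    linarith
  set d : ℕ → B → ℝ := fun n y => a n * c (n + 1) y with hd_def
  have hd_pos : ∀ n y, 0 < d n y := fun n y => mul_pos (ha_pos n) (hc_pos _ y)
  have hd_lt_l : ∀ n y, d n y < l y := by
    intro n y
    calc d n y < 1 * c (n+1) y := by
          apply mul_lt_mul_of_pos_right (ha_lt_one n) (hc_pos _ y)
      _ = c (n+1) y := one_mul _
      _ ≤ l y := hc_le _ y
  have hd_mono : ∀ n y, d n y < d (n + 1) y := by
    intro n y
    calc d n y < a (n+1) * c (n+1) y :=
          mul_lt_mul_of_pos_right (ha_mono n) (hc_pos _ y)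
      _ ≤ a (n+1) * c (n+2) y := by
          apply mul_le_mul_of_nonneg_left (hc_mono (n+1) (n+2) (by omega) y) (ha_pos _).le
      _ = d (n+1) y := rfl
  have hd_cont : ∀ n, Continuous (d n) := fun n => (continuous_const.mul (hc_cont (n+1)))
  have hd_sup : ∀ (y : B) (ε : ℝ), 0 < ε → ∃ n, l y - ε < d n y := by
    intro y ε hε
    obtain ⟨n₀, hn₀⟩ := hc_sup y (ε / 3) (by linarith)
    obtain ⟨n₁, hn₁⟩ := exists_pow_lt_of_lt_one (show (0:ℝ) < ε/3 by linarith)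
      (show (1/2:ℝ) < 1 by norm_num)
    set n := max n₀ n₁ with hn_def
    refine ⟨n, ?_⟩
    have h1 : l y - ε/3 ≤ c (n+1) y := hn₀ (n+1) (le_trans (le_max_left n₀ n₁) (Nat.le_succ n))
    have h2 : (1/2:ℝ) ^ (n+1) < ε/3 := by
      refine lt_of_le_of_lt ?_ hn₁
      exact pow_le_pow_of_le_one (by norm_num) (by norm_num)
        (le_trans (le_max_right n₀ n₁) (Nat.le_succ n))
    have h3 : c (n+1) y ≤ 1 := le_trans (hc_le _ y) (hl_le y)
    have h4 : d n y = c (n+1) y - (1/2:ℝ)^(n+1) * c (n+1) y := by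
      simp only [hd_def, ha_def]; ring
    have h5 : (1/2:ℝ)^(n+1) * c (n+1) y ≤ (1/2:ℝ)^(n+1) := by
      nlinarith [hc_pos (n+1) y, pow_pos (show (0:ℝ) < 1/2 by norm_num) (n+1)]
    rw [h4]
    linarith
  -- smooth functions squeezed between successive d's
  have smooth_step : ∀ n : ℕ, ∃ g : B → ℝ, ContMDiff I 𝓘(ℝ, ℝ) (⊤ : ℕ∞) g ∧
      ∀ y, g y ∈ Ioo (d (2*n) y) (d (2*n+1) y) := by
    intro n
    have hloc : ∀ x : B, ∃ k : ℝ, ∀ᶠ y in nhds x, k ∈ Ioo (d (2*n) y) (d (2*n+1) y) := by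
      intro x
      refine ⟨(d (2*n) x + d (2*n+1) x) / 2, ?_⟩
      have hopen : IsOpen {y | d (2*n) y < (d (2*n) x + d (2*n+1) x) / 2 ∧
          (d (2*n) x + d (2*n+1) x) / 2 < d (2*n+1) y} := by
        apply IsOpen.inter
        · exact isOpen_lt (hd_cont _) continuous_const
        · exact isOpen_lt continuous_const (hd_cont _)
      have hx : x ∈ {y | d (2*n) y < (d (2*n) x + d (2*n+1) x) / 2 ∧
          (d (2*n) x + d (2*n+1) x) / 2 < d (2*n+1) y} :=
        ⟨by linarith [hd_mono (2*n) x], by linarith [hd_mono (2*n) x]⟩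
      filter_upwards [hopen.mem_nhds hx] with y hy
      exact ⟨hy.1, hy.2⟩
    obtain ⟨g, hg⟩ := exists_contMDiffMap_forall_mem_convex_of_local_const I (n := (⊤ : ℕ∞))
      (t := fun y => Ioo (d (2*n) y) (d (2*n+1) y)) (fun x => convex_Ioo _ _) hloc
    exact ⟨g, g.contMDiff, hg⟩
  choose f hf_smooth hf_mem using smooth_step
  refine ⟨f, hf_smooth, ?_, ?_, ?_, ?_⟩
  · intro n y
    exact lt_trans (hd_pos _ y) (hf_mem n y).1
  · intro n y
    calc f n y < d (2*n+1) y := (hf_mem n y).2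
      _ < d (2*n+1+1) y := hd_mono _ y
      _ = d (2*(n+1)) y := by rw [show 2*n+1+1 = 2*(n+1) from by omega]
      _ < f (n+1) y := (hf_mem (n+1) y).1
  · intro n y
    exact lt_trans (hf_mem n y).2 (hd_lt_l _ y)
  · intro y
    have hub : ∀ n, f n y ≤ l y := fun n => (lt_trans (hf_mem n y).2 (hd_lt_l _ y)).le
    have hbdda : BddAbove (range fun n => f n y) := ⟨l y, by rintro w ⟨n, rfl⟩; exact hub n⟩
    refine le_antisymm (ciSup_le hub) ?_
    by_contra hlt
    push_neg at hlt
    obtain ⟨n, hn⟩ := hd_sup y (l y - ⨆ n, f n y) (by linarith)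
    have hd_mono_le : Monotone (fun m => d m y) := monotone_nat_of_le_succ fun m => (hd_mono m y).le
    have h1 : d n y ≤ d (2*n) y := hd_mono_le (by omega)
    have h2 : f n y ≤ ⨆ m, f m y := le_ciSup hbdda n
    have h3 : d (2*n) y < f n y := (hf_mem n y).1
    simp only [sub_sub_cancel] at hn
    linarith
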